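/- There is no product vector a ⊗ b in ℂ³ ⊗ ℂ³ (with a, b nonzero) orthogonal to all five Pyramid states ψ_i = v_i ⊗ v_{2i mod 5}, i = 0,...,4. -/

import Mathlib

noncomputable def pyrH : ℝ := (1/2) * Real.sqrt (1 + Real.sqrt 5)

noncomputable def pyrN : ℝ := 2 / Real.sqrt (5 + Real.sqrt 5)

/-- The Pyramid vectors, regarded as vectors in ℂ³. -/
noncomputable def pyrVC (i : Fin 5) : EuclideanSpace ℂ (Fin 3) :=
  WithLp.toLp 2 (![(pyrN * Real.cos (2 * Real.pi * (i : ℕ) / 5) : ℝ),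
    (pyrN * Real.sin (2 * Real.pi * (i : ℕ) / 5) : ℝ),
    (pyrN * pyrH : ℝ)] : Fin 3 → ℂ)



-- trig product identity
lemma sin4 (a b : ℝ) : Real.sin a + Real.sin b - Real.sin (a+b)
    = 4 * Real.sin (a/2) * Real.sin (b/2) * Real.sin ((a+b)/2) := by
  have H : ∀ x y : ℝ, Real.sin (2*x) + Real.sin (2*y) - Real.sin (2*x + 2*y)
      = 4 * Real.sin x * Real.sin y * Real.sin (x+y) := by
    intro x y
    rw [Real.sin_add (2*x) (2*y), Real.sin_two_mul, Real.sin_two_mul,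
      Real.cos_two_mul, Real.cos_two_mul, Real.sin_add]
    linear_combination (-4*Real.sin x*Real.cos x) * Real.sin_sq_add_cos_sq y +
      (-4*Real.sin y*Real.cos y) * Real.sin_sq_add_cos_sq x
  have h := H (a/2) (b/2)
  rw [show 2*(a/2) = a by ring, show 2*(b/2) = b by ring,
    show a/2 + b/2 = (a+b)/2 by ring] at h
  exact h

lemma sinhalf (x : ℝ) (h0 : 0 < x) (h5 : x < 5) : 0 < Real.sin (2*Real.pi*x/5/2) := by
  rw [show 2*Real.pi*x/5/2 = Real.pi*(x/5) by ring]
  apply Real.sin_pos_of_pos_of_lt_pi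
  · positivity
  · nlinarith [Real.pi_pos]

lemma Spos (x y : ℝ) (hx : 0 < x) (hy : 0 < y) (hxy : x + y < 5) :
    0 < Real.sin (2*Real.pi*x/5) + Real.sin (2*Real.pi*y/5) - Real.sin (2*Real.pi*(x+y)/5) := by
  have h := sin4 (2*Real.pi*x/5) (2*Real.pi*y/5)
  rw [show 2*Real.pi*x/5 + 2*Real.pi*y/5 = 2*Real.pi*(x+y)/5 by ring] at h
  rw [h]
  have s1 := sinhalf x hx (by linarith)
  have s2 := sinhalf y hy (by linarith)
  have s3 := sinhalf (x+y) (by linarith) hxy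
  positivity

noncomputable def pyrF (i j k : Fin 5) : ℝ :=
  (Real.cos (2*Real.pi*(i:ℕ)/5) * Real.sin (2*Real.pi*(j:ℕ)/5)
    - Real.sin (2*Real.pi*(i:ℕ)/5) * Real.cos (2*Real.pi*(j:ℕ)/5))
  + (Real.cos (2*Real.pi*(j:ℕ)/5) * Real.sin (2*Real.pi*(k:ℕ)/5)
    - Real.sin (2*Real.pi*(j:ℕ)/5) * Real.cos (2*Real.pi*(k:ℕ)/5))
  + (Real.cos (2*Real.pi*(k:ℕ)/5) * Real.sin (2*Real.pi*(i:ℕ)/5)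
    - Real.sin (2*Real.pi*(k:ℕ)/5) * Real.cos (2*Real.pi*(i:ℕ)/5))

lemma Fpos (i j k : Fin 5) (hij : i < j) (hjk : j < k) : 0 < pyrF i j k := by
  have hij' : ((i:ℕ):ℝ) < ((j:ℕ):ℝ) := by exact_mod_cast (Fin.lt_def.mp hij)
  have hjk' : ((j:ℕ):ℝ) < ((k:ℕ):ℝ) := by exact_mod_cast (Fin.lt_def.mp hjk)
  have hk5 : ((k:ℕ):ℝ) < 5 := by exact_mod_cast k.isLt
  have hi0 : (0:ℝ) ≤ ((i:ℕ):ℝ) := by positivity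
  have h := Spos (((j:ℕ):ℝ) - ((i:ℕ):ℝ)) (((k:ℕ):ℝ) - ((j:ℕ):ℝ))
    (by linarith) (by linarith) (by linarith)
  rw [show (((j:ℕ):ℝ) - ((i:ℕ):ℝ)) + (((k:ℕ):ℝ) - ((j:ℕ):ℝ)) = ((k:ℕ):ℝ) - ((i:ℕ):ℝ) by ring,
    show 2*Real.pi*(((j:ℕ):ℝ) - ((i:ℕ):ℝ))/5 = 2*Real.pi*(j:ℕ)/5 - 2*Real.pi*(i:ℕ)/5 by ring,
    show 2*Real.pi*(((k:ℕ):ℝ) - ((j:ℕ):ℝ))/5 = 2*Real.pi*(k:ℕ)/5 - 2*Real.pi*(j:ℕ)/5 by ring,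
    show 2*Real.pi*(((k:ℕ):ℝ) - ((i:ℕ):ℝ))/5 = 2*Real.pi*(k:ℕ)/5 - 2*Real.pi*(i:ℕ)/5 by ring,
    Real.sin_sub, Real.sin_sub, Real.sin_sub] at h
  unfold pyrF
  nlinarith [h]

lemma Fne (i j k : Fin 5) (hij : i ≠ j) (hik : i ≠ k) (hjk : j ≠ k) : pyrF i j k ≠ 0 := by
  intro h0
  rcases lt_trichotomy i j with h1 | h1 | h1
  · rcases lt_trichotomy j k with h2 | h2 | h2
    · exact absurd h0 (ne_of_gt (Fpos i j k h1 h2))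
    · exact hjk h2
    · rcases lt_trichotomy i k with h3 | h3 | h3
      · have hp := Fpos i k j h3 h2
        simp only [pyrF] at h0 hp; linarith
      · exact hik h3
      · have hp := Fpos k i j h3 h1
        simp only [pyrF] at h0 hp; linarith
  · exact hij h1
  · rcases lt_trichotomy i k with h2 | h2 | h2
    · have hp := Fpos j i k h1 h2
      simp only [pyrF] at h0 hp; linarith
    · exact hik h2
    · rcases lt_trichotomy j k with h3 | h3 | h3
      · have hp := Fpos j k i h3 h2
        simp only [pyrF] at h0 hp; linarith
      · exact hjk h3
      · have hp := Fpos k j i h3 h1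
        simp only [pyrF] at h0 hp; linarith

lemma solve3 (x₁ y₁ x₂ y₂ x₃ y₃ z c₀ c₁ c₂ : ℂ)
    (hdet : x₁*y₂*z - x₁*y₃*z - x₂*y₁*z + x₂*y₃*z + x₃*y₁*z - x₃*y₂*z ≠ 0)
    (h1 : c₀*x₁ + c₁*y₁ + c₂*z = 0) (h2 : c₀*x₂ + c₁*y₂ + c₂*z = 0)
    (h3 : c₀*x₃ + c₁*y₃ + c₂*z = 0) :
    c₀ = 0 ∧ c₁ = 0 ∧ c₂ = 0 := by
  set D := x₁*y₂*z - x₁*y₃*z - x₂*y₁*z + x₂*y₃*z + x₃*y₁*z - x₃*y₂*z with hD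
  refine ⟨?_, ?_, ?_⟩
  · have h0 : c₀ * D = 0 := by
      rw [hD]; linear_combination (y₂*z - y₃*z)*h1 - (y₁*z - y₃*z)*h2 + (y₁*z - y₂*z)*h3
    exact (mul_eq_zero.mp h0).resolve_right hdet
  · have h0 : c₁ * D = 0 := by
      rw [hD]; linear_combination (-(x₂*z) + x₃*z)*h1 + (x₁*z - x₃*z)*h2 + (-(x₁*z) + x₂*z)*h3
    exact (mul_eq_zero.mp h0).resolve_right hdet
  · have h0 : c₂ * D = 0 := by
      rw [hD]; linear_combination (x₂*y₃ - x₃*y₂)*h1 - (x₁*y₃ - x₃*y₁)*h2 + (x₁*y₂ - x₂*y₁)*h3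
    exact (mul_eq_zero.mp h0).resolve_right hdet


lemma pyrH_pos : 0 < pyrH := by
  unfold pyrH
  have h5 : (0:ℝ) < Real.sqrt 5 := Real.sqrt_pos.mpr (by norm_num)
  have : (0:ℝ) < 1 + Real.sqrt 5 := by linarith
  positivity

lemma pyrN_pos : 0 < pyrN := by
  unfold pyrN
  have h5 : (0:ℝ) < Real.sqrt 5 := Real.sqrt_pos.mpr (by norm_num)
  have : (0:ℝ) < 5 + Real.sqrt 5 := by linarith
  positivity

lemma key (a : EuclideanSpace ℂ (Fin 3)) (i j k : Fin 5)
    (hij : i ≠ j) (hik : i ≠ k) (hjk : j ≠ k)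
    (h1 : (inner ℂ a (pyrVC i) : ℂ) = 0) (h2 : (inner ℂ a (pyrVC j) : ℂ) = 0)
    (h3 : (inner ℂ a (pyrVC k) : ℂ) = 0) : a = 0 := by
  simp only [pyrVC, PiLp.inner_apply, PiLp.toLp_apply, RCLike.inner_apply, Fin.sum_univ_three,
    Matrix.cons_val_zero, Matrix.cons_val_one, Matrix.head_cons,
    Matrix.cons_val_two, Matrix.tail_cons] at h1 h2 h3
  have hdet : ((pyrN * Real.cos (2*Real.pi*(i:ℕ)/5) : ℝ) : ℂ) * ((pyrN * Real.sin (2*Real.pi*(j:ℕ)/5) : ℝ) : ℂ) * ((pyrN * pyrH : ℝ) : ℂ)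
      - ((pyrN * Real.cos (2*Real.pi*(i:ℕ)/5) : ℝ) : ℂ) * ((pyrN * Real.sin (2*Real.pi*(k:ℕ)/5) : ℝ) : ℂ) * ((pyrN * pyrH : ℝ) : ℂ)
      - ((pyrN * Real.cos (2*Real.pi*(j:ℕ)/5) : ℝ) : ℂ) * ((pyrN * Real.sin (2*Real.pi*(i:ℕ)/5) : ℝ) : ℂ) * ((pyrN * pyrH : ℝ) : ℂ)
      + ((pyrN * Real.cos (2*Real.pi*(j:ℕ)/5) : ℝ) : ℂ) * ((pyrN * Real.sin (2*Real.pi*(k:ℕ)/5) : ℝ) : ℂ) * ((pyrN * pyrH : ℝ) : ℂ)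
      + ((pyrN * Real.cos (2*Real.pi*(k:ℕ)/5) : ℝ) : ℂ) * ((pyrN * Real.sin (2*Real.pi*(i:ℕ)/5) : ℝ) : ℂ) * ((pyrN * pyrH : ℝ) : ℂ)
      - ((pyrN * Real.cos (2*Real.pi*(k:ℕ)/5) : ℝ) : ℂ) * ((pyrN * Real.sin (2*Real.pi*(j:ℕ)/5) : ℝ) : ℂ) * ((pyrN * pyrH : ℝ) : ℂ) ≠ 0 := by
    have e : ((pyrN^3 * pyrH * pyrF i j k : ℝ) : ℂ) ≠ 0 := by
      rw [Complex.ofReal_ne_zero]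
      exact mul_ne_zero (mul_ne_zero (pow_ne_zero 3 (ne_of_gt pyrN_pos)) (ne_of_gt pyrH_pos))
        (Fne i j k hij hik hjk)
    intro h0
    apply e
    rw [← h0]
    push_cast [pyrF]
    ring
  obtain ⟨e0, e1, e2⟩ := solve3
    ((pyrN * Real.cos (2*Real.pi*(i:ℕ)/5) : ℝ) : ℂ) ((pyrN * Real.sin (2*Real.pi*(i:ℕ)/5) : ℝ) : ℂ)
    ((pyrN * Real.cos (2*Real.pi*(j:ℕ)/5) : ℝ) : ℂ) ((pyrN * Real.sin (2*Real.pi*(j:ℕ)/5) : ℝ) : ℂ)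
    ((pyrN * Real.cos (2*Real.pi*(k:ℕ)/5) : ℝ) : ℂ) ((pyrN * Real.sin (2*Real.pi*(k:ℕ)/5) : ℝ) : ℂ)
    ((pyrN * pyrH : ℝ) : ℂ)
    ((starRingEnd ℂ) (a 0)) ((starRingEnd ℂ) (a 1)) ((starRingEnd ℂ) (a 2)) hdet
    (by linear_combination h1) (by linear_combination h2) (by linear_combination h3)
  have z0 : a 0 = 0 := by simpa using congrArg (starRingEnd ℂ) e0
  have z1 : a 1 = 0 := by simpa using congrArg (starRingEnd ℂ) e1
  have z2 : a 2 = 0 := by simpa using congrArg (starRingEnd ℂ) e2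
  ext m
  fin_cases m <;> simpa using ‹_›

/-- No nonzero product vector a ⊗ b in ℂ³ ⊗ ℂ³ is orthogonal to all five Pyramid
states ψ_i = v_i ⊗ v_{2i mod 5}: a ⊗ b ⊥ v_i ⊗ v_{2i mod 5} iff
⟨a, v_i⟩ = 0 or ⟨b, v_{2i mod 5}⟩ = 0. -/
theorem stmt3 :
    ¬ ∃ (a b : EuclideanSpace ℂ (Fin 3)), a ≠ 0 ∧ b ≠ 0 ∧
      ∀ i : Fin 5, (inner ℂ a (pyrVC i) : ℂ) = 0 ∨ (inner ℂ b (pyrVC (2 * i)) : ℂ) = 0 := by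
  rintro ⟨a, b, ha, hb, h⟩
  have h0 := h 0; have h1 := h 1; have h2 := h 2; have h3 := h 3; have h4 := h 4
  rw [show (2*0 : Fin 5) = 0 by decide] at h0
  rw [show (2*1 : Fin 5) = 2 by decide] at h1
  rw [show (2*2 : Fin 5) = 4 by decide] at h2
  rw [show (2*3 : Fin 5) = 1 by decide] at h3
  rw [show (2*4 : Fin 5) = 3 by decide] at h4
  rcases h0 with hA0 | hB0 <;> rcases h1 with hA1 | hB1 <;> rcases h2 with hA2 | hB2 <;>
    rcases h3 with hA3 | hB3 <;> rcases h4 with hA4 | hB4 <;>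
  first
  | exact ha (key a 0 1 2 (by decide) (by decide) (by decide) hA0 hA1 hA2)
  | exact ha (key a 0 1 3 (by decide) (by decide) (by decide) hA0 hA1 hA3)
  | exact ha (key a 0 1 4 (by decide) (by decide) (by decide) hA0 hA1 hA4)
  | exact ha (key a 0 2 3 (by decide) (by decide) (by decide) hA0 hA2 hA3)
  | exact ha (key a 0 2 4 (by decide) (by decide) (by decide) hA0 hA2 hA4)
  | exact ha (key a 0 3 4 (by decide) (by decide) (by decide) hA0 hA3 hA4)
  | exact ha (key a 1 2 3 (by decide) (by decide) (by decide) hA1 hA2 hA3)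
  | exact ha (key a 1 2 4 (by decide) (by decide) (by decide) hA1 hA2 hA4)
  | exact ha (key a 1 3 4 (by decide) (by decide) (by decide) hA1 hA3 hA4)
  | exact ha (key a 2 3 4 (by decide) (by decide) (by decide) hA2 hA3 hA4)
  | exact hb (key b 0 2 4 (by decide) (by decide) (by decide) hB0 hB1 hB2)
  | exact hb (key b 0 2 1 (by decide) (by decide) (by decide) hB0 hB1 hB3)
  | exact hb (key b 0 2 3 (by decide) (by decide) (by decide) hB0 hB1 hB4)
  | exact hb (key b 0 4 1 (by decide) (by decide) (by decide) hB0 hB2 hB3)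
  | exact hb (key b 0 4 3 (by decide) (by decide) (by decide) hB0 hB2 hB4)
  | exact hb (key b 0 1 3 (by decide) (by decide) (by decide) hB0 hB3 hB4)
  | exact hb (key b 2 4 1 (by decide) (by decide) (by decide) hB1 hB2 hB3)
  | exact hb (key b 2 4 3 (by decide) (by decide) (by decide) hB1 hB2 hB4)
  | exact hb (key b 2 1 3 (by decide) (by decide) (by decide) hB1 hB3 hB4)
  | exact hb (key b 4 1 3 (by decide) (by decide) (by decide) hB2 hB3 hB4)
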